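/- Closed unit balls centered at the points of the lattice ℤ × ℤ × √2·ℤ cover ℝ³: for every v ∈ ℝ³ there exist integers a, b, c such that ‖v − (a, b, √2·c)‖ ≤ 1. -/

import Mathlib

/-- Closed unit balls centered at the points of the lattice
`ℤ × ℤ × √2·ℤ` cover `ℝ³`. -/
theorem unit_balls_cover_symmetric_lattice (v : EuclideanSpace ℝ (Fin 3)) :
    ∃ a b c : ℤ,
      ‖v - (WithLp.equiv 2 (Fin 3 → ℝ)).symm ![(a : ℝ), (b : ℝ), Real.sqrt 2 * (c : ℝ)]‖ ≤ 1 := by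
  refine ⟨round (v 0), round (v 1), round (v 2 / Real.sqrt 2), ?_⟩
  have hs : Real.sqrt 2 > 0 := by positivity
  have hsq : Real.sqrt 2 ^ 2 = 2 := Real.sq_sqrt (by norm_num)
  have h0 : |v 0 - (round (v 0) : ℝ)| ≤ 1/2 := abs_sub_round _
  have h1 : |v 1 - (round (v 1) : ℝ)| ≤ 1/2 := abs_sub_round _
  have h2 : |v 2 - Real.sqrt 2 * (round (v 2 / Real.sqrt 2) : ℝ)| ≤ Real.sqrt 2 / 2 := by
    have := abs_sub_round (v 2 / Real.sqrt 2)
    calc |v 2 - Real.sqrt 2 * (round (v 2 / Real.sqrt 2) : ℝ)|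
        = Real.sqrt 2 * |v 2 / Real.sqrt 2 - (round (v 2 / Real.sqrt 2) : ℝ)| := by
          rw [show v 2 - Real.sqrt 2 * (round (v 2 / Real.sqrt 2) : ℝ)
              = Real.sqrt 2 * (v 2 / Real.sqrt 2 - (round (v 2 / Real.sqrt 2) : ℝ)) by
            field_simp, abs_mul, abs_of_pos hs]
      _ ≤ Real.sqrt 2 * (1/2) := by nlinarith
      _ = Real.sqrt 2 / 2 := by ring
  rw [EuclideanSpace.norm_eq, show (1:ℝ) = Real.sqrt 1 by simp]
  apply Real.sqrt_le_sqrt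
  rw [Fin.sum_univ_three]
  simp only [PiLp.sub_apply, WithLp.equiv_symm_apply, PiLp.toLp_apply, Matrix.cons_val_zero,
    Matrix.cons_val_one, Matrix.head_cons, Matrix.cons_val_two, Matrix.tail_cons]
  simp only [Real.norm_eq_abs, sq_abs]
  have b0 : (v 0 - (round (v 0):ℝ))^2 ≤ (1/2)^2 := by
    rw [← sq_abs]; exact pow_le_pow_left₀ (abs_nonneg _) h0 2
  have b1 : (v 1 - (round (v 1):ℝ))^2 ≤ (1/2)^2 := by
    rw [← sq_abs]; exact pow_le_pow_left₀ (abs_nonneg _) h1 2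
  have b2 : (v 2 - Real.sqrt 2 * (round (v 2 / Real.sqrt 2):ℝ))^2 ≤ (Real.sqrt 2 / 2)^2 := by
    rw [← sq_abs]; exact pow_le_pow_left₀ (abs_nonneg _) h2 2
  nlinarith
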